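/- Let G be a graph on n vertices with n ≥ 3 whose graph obtained by removing all universal vertices is isomorphic to the empty graph on 3 vertices (three pairwise non-adjacent vertices), and let k ≤ n − 2. Then B_{≥k}(G) is isomorphic to K₅ minus an edge. -/

import Mathlib

open Finset

variable {V : Type*} [Fintype V] [DecidableEq V]

def IsISP (G : SimpleGraph V) (P : Finpartition (univ : Finset V)) : Prop :=
  ∀ A ∈ P.parts, ∀ u ∈ A, ∀ v ∈ A, ¬ G.Adj u v

def samePart (P : Finpartition (univ : Finset V)) (u v : V) : Prop :=
  ∃ A ∈ P.parts, u ∈ A ∧ v ∈ A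

def MovedBy (P Q : Finpartition (univ : Finset V)) (x : V) : Prop :=
  P ≠ Q ∧ ∀ u v : V, u ≠ x → v ≠ x → (samePart P u v ↔ samePart Q u v)

def BellGraph (G : SimpleGraph V) :
    SimpleGraph {P : Finpartition (univ : Finset V) // IsISP G P} where
  Adj P Q := ∃ x, MovedBy P.1 Q.1 x
  symm := by
    constructor
    rintro P Q ⟨x, hne, h⟩
    exact ⟨x, Ne.symm hne, fun u v hu hv => (h u v hu hv).symm⟩
  loopless := by
    constructor
    rintro P ⟨x, hne, _⟩
    exact hne rfl

def UpperBell (G : SimpleGraph V) (k : ℕ) :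
    SimpleGraph {P : Finpartition (univ : Finset V) // IsISP G P ∧ k ≤ P.parts.card} where
  Adj P Q := ∃ x, MovedBy P.1 Q.1 x
  symm := by
    constructor
    rintro P Q ⟨x, hne, h⟩
    exact ⟨x, Ne.symm hne, fun u v hu hv => (h u v hu hv).symm⟩
  loopless := by
    constructor
    rintro P ⟨x, hne, _⟩
    exact hne rfl

def IsUniversal (G : SimpleGraph V) (v : V) : Prop :=
  ∀ w, w ≠ v → G.Adj v w

def K5minusEdge : SimpleGraph (Fin 5) where
  Adj a b := a ≠ b ∧ ¬ (a = 0 ∧ b = 1) ∧ ¬ (a = 1 ∧ b = 0)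
  symm := by constructor; rintro a b ⟨h1, h2, h3⟩; exact ⟨h1.symm, fun h => h3 ⟨h.2, h.1⟩, fun h => h2 ⟨h.2, h.1⟩⟩
  loopless := by constructor; rintro a ⟨h, _⟩; exact h rfl

def relB (B : Finset V) : Setoid V where
  r u v := u = v ∨ (u ∈ B ∧ v ∈ B)
  iseqv := ⟨fun _ => Or.inl rfl,
    fun h => h.elim (fun e => Or.inl e.symm) (fun h => Or.inr ⟨h.2, h.1⟩),
    fun h1 h2 => by
      rcases h1 with rfl | h1
      · exact h2
      rcases h2 with rfl | h2
      · exact Or.inr h1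
      exact Or.inr ⟨h1.1, h2.2⟩⟩
instance (B : Finset V) : DecidableRel (relB B).r := fun u v =>
  inferInstanceAs (Decidable (_ ∨ _))
def PB (B : Finset V) : Finpartition (univ : Finset V) := Finpartition.ofSetoid (relB B)
lemma samePart_iff_mem_part {P : Finpartition (univ : Finset V)} {u v : V} :
    samePart P u v ↔ v ∈ P.part u := by
  constructor
  · rintro ⟨A, hA, hu, hv⟩
    rwa [P.part_eq_of_mem hA hu]
  · intro hv
    exact ⟨P.part u, P.part_mem.mpr (mem_univ u), P.mem_part (mem_univ u), hv⟩
lemma samePart_iff_part_eq {P : Finpartition (univ : Finset V)} {u v : V} :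
    samePart P u v ↔ P.part u = P.part v := by
  rw [samePart_iff_mem_part, P.mem_part_iff_part_eq_part (mem_univ v) (mem_univ u)]
  exact eq_comm
lemma samePart_PB {B : Finset V} {u v : V} :
    samePart (PB B) u v ↔ u = v ∨ (u ∈ B ∧ v ∈ B) := by
  rw [samePart_iff_mem_part]
  exact Finpartition.mem_part_ofSetoid_iff_rel
lemma partPB_eq_iff {B : Finset V} {u v : V} :
    (PB B).part u = (PB B).part v ↔ (u = v ∨ (u ∈ B ∧ v ∈ B)) := by
  rw [← samePart_iff_part_eq, samePart_PB]
lemma finpart_eq_of_samePart {P Q : Finpartition (univ : Finset V)}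
    (h : ∀ u v, samePart P u v ↔ samePart Q u v) : P = Q := by
  have hpart : ∀ u, P.part u = Q.part u := by
    intro u
    ext v
    rw [← samePart_iff_mem_part, ← samePart_iff_mem_part, h]
  ext A
  constructor
  · intro hA
    obtain ⟨u, hu⟩ := P.nonempty_of_mem_parts hA
    rw [← P.part_eq_of_mem hA hu, hpart]
    exact Q.part_mem.mpr (mem_univ u)
  · intro hA
    obtain ⟨u, hu⟩ := Q.nonempty_of_mem_parts hA
    rw [← Q.part_eq_of_mem hA hu, ← hpart]
    exact P.part_mem.mpr (mem_univ u)

-- NEW PART --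

def blk (a b c : V) : Fin 5 → Finset V
  | 0 => {a, b, c}
  | 1 => ∅
  | 2 => {a, b}
  | 3 => {a, c}
  | 4 => {b, c}

def idx (P : Finpartition (univ : Finset V)) (a b c : V) : Fin 5 :=
  if P.part a = P.part b then (if P.part a = P.part c then 0 else 2)
  else if P.part a = P.part c then 3
  else if P.part b = P.part c then 4 else 1

section Classify
variable {G : SimpleGraph V} {a b c : V}

lemma isp_PB {B : Finset V} (hB : B ⊆ {a, b, c})
    (hadj : ∀ u v : V, u ∈ ({a, b, c} : Finset V) → v ∈ ({a, b, c} : Finset V) → ¬ G.Adj u v) :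
    IsISP G (PB B) := by
  intro A hA u hu v hv hGadj
  have hsp : samePart (PB B) u v := ⟨A, hA, hu, hv⟩
  rw [samePart_PB] at hsp
  rcases hsp with rfl | ⟨h1, h2⟩
  · exact G.loopless.irrefl _ hGadj
  · exact hadj u v (hB h1) (hB h2) hGadj

lemma samePart_mem {P : Finpartition (univ : Finset V)} {u v : V}
    (huniv : ∀ v : V, v ∉ ({a, b, c} : Finset V) → IsUniversal G v)
    (hP : IsISP G P) (h : samePart P u v) (huv : u ≠ v) :
    u ∈ ({a, b, c} : Finset V) ∧ v ∈ ({a, b, c} : Finset V) := by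
  obtain ⟨A, hA, hu, hv⟩ := h
  constructor
  · by_contra hu'
    exact hP A hA u hu v hv ((huniv u hu') v (Ne.symm huv))
  · by_contra hv'
    exact hP A hA u hu v hv (((huniv v hv') u huv).symm)

lemma card_abc (hab : a ≠ b) (hac : a ≠ c) (hbc : b ≠ c) :
    ({a, b, c} : Finset V).card = 3 := by
  rw [card_insert_of_notMem (by simp [hab, hac]),
    card_insert_of_notMem (by simp [hbc]), card_singleton]

lemma card_bound {P : Finpartition (univ : Finset V)}
    (hab : a ≠ b) (hac : a ≠ c) (hbc : b ≠ c)
    (huniv : ∀ v : V, v ∉ ({a, b, c} : Finset V) → IsUniversal G v)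
    (hn : 3 ≤ Fintype.card V) (hP : IsISP G P) :
    Fintype.card V - 2 ≤ P.parts.card := by
  set T : Finset (Finset V) := (univ \ ({a, b, c} : Finset V)).image P.part with hT
  have hinj : Set.InjOn P.part ↑(univ \ ({a, b, c} : Finset V)) := by
    intro u hu v hv huv
    by_contra hne
    have := samePart_mem huniv hP (samePart_iff_part_eq.mpr huv) hne
    simp only [coe_sdiff, coe_univ, Set.mem_diff, Set.mem_univ, true_and, mem_coe] at hu
    exact hu this.1
  have hTcard : T.card = Fintype.card V - 3 := by
    rw [hT, card_image_of_injOn hinj, card_sdiff_of_subset (subset_univ _), card_univ,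
      card_abc hab hac hbc]
  have hnotmem : P.part a ∉ T := by
    intro hmem
    obtain ⟨u, hu, hue⟩ := mem_image.mp hmem
    rw [mem_sdiff] at hu
    have hua : u ≠ a := fun h => hu.2 (by simp [h])
    have := samePart_mem huniv hP (samePart_iff_part_eq.mpr hue) hua
    exact hu.2 this.1
  have hsub : insert (P.part a) T ⊆ P.parts := by
    intro A hA
    rcases mem_insert.mp hA with rfl | hA
    · exact P.part_mem.mpr (mem_univ a)
    · obtain ⟨u, _, rfl⟩ := mem_image.mp hA
      exact P.part_mem.mpr (mem_univ u)
  have hle := card_le_card hsub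
  rw [card_insert_of_notMem hnotmem, hTcard] at hle
  omega

lemma classify {P : Finpartition (univ : Finset V)}
    (hab : a ≠ b) (hac : a ≠ c) (hbc : b ≠ c)
    (huniv : ∀ v : V, v ∉ ({a, b, c} : Finset V) → IsUniversal G v)
    (hP : IsISP G P) : P = PB (blk a b c (idx P a b c)) := by
  apply finpart_eq_of_samePart
  intro u v
  rw [samePart_PB, samePart_iff_part_eq]
  have key : ∀ u v : V, P.part u = P.part v → u ≠ v →
      u ∈ ({a, b, c} : Finset V) ∧ v ∈ ({a, b, c} : Finset V) :=
    fun u v h hne => samePart_mem huniv hP (samePart_iff_part_eq.mpr h) hne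
  unfold idx
  split_ifs with h1 h2 h3 h4 <;>
  first
  | -- nonempty block cases
    (constructor
     · intro h
       by_cases huv : u = v
       · exact Or.inl huv
       · obtain ⟨hu, hv⟩ := key u v h huv
         simp only [mem_insert, mem_singleton] at hu hv
         simp only [blk, mem_insert, mem_singleton]
         rcases hu with rfl | rfl | rfl <;> rcases hv with rfl | rfl | rfl <;> simp_all
     · intro h
       simp only [blk, mem_insert, mem_singleton] at h
       rcases h with rfl | ⟨hu, hv⟩
       · rfl
       · first
         | (rcases hu with rfl | rfl | rfl <;> rcases hv with rfl | rfl | rfl <;> simp_all)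
         | (rcases hu with rfl | rfl <;> rcases hv with rfl | rfl <;> simp_all))
  | -- empty block case
    (simp only [blk, not_mem_empty, false_and, or_false]
     constructor
     · intro h
       by_contra huv
       obtain ⟨hu, hv⟩ := key u v h huv
       simp only [mem_insert, mem_singleton] at hu hv
       rcases hu with rfl | rfl | rfl <;> rcases hv with rfl | rfl | rfl <;> simp_all
     · rintro rfl; rfl)


-- ADJACENCY PART --

end Classify

section Adj
variable {a b c : V}

lemma PB_ne {B1 B2 : Finset V} {u v : V}
    (h : u ∈ B1 ∧ v ∈ B1) (h2 : u ≠ v) (h3 : ¬(u ∈ B2 ∧ v ∈ B2)) : PB B1 ≠ PB B2 := by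
  intro he
  have hs : samePart (PB B1) u v := samePart_PB.mpr (Or.inr h)
  rw [he, samePart_PB] at hs
  tauto

lemma PB_adj {B1 B2 : Finset V} (x : V) (hne : PB B1 ≠ PB B2)
    (h : ∀ u v : V, u ≠ x → v ≠ x →
      ((u = v ∨ (u ∈ B1 ∧ v ∈ B1)) ↔ (u = v ∨ (u ∈ B2 ∧ v ∈ B2)))) :
    ∃ y, MovedBy (PB B1) (PB B2) y :=
  ⟨x, hne, fun u v hu hv => by rw [samePart_PB, samePart_PB]; exact h u v hu hv⟩

lemma moved_symm {P Q : Finpartition (univ : Finset V)} :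
    (∃ x, MovedBy P Q x) → ∃ x, MovedBy Q P x := by
  rintro ⟨x, hne, h⟩
  exact ⟨x, hne.symm, fun u v hu hv => (h u v hu hv).symm⟩

lemma not_adj_01 (hab : a ≠ b) (hac : a ≠ c) (hbc : b ≠ c) :
    ¬ ∃ x, MovedBy (PB ({a, b, c} : Finset V)) (PB (∅ : Finset V)) x := by
  rintro ⟨x, hne, h⟩
  obtain ⟨u, v, hu, hv, huv, hux, hvx⟩ :
      ∃ u v : V, u ∈ ({a, b, c} : Finset V) ∧ v ∈ ({a, b, c} : Finset V) ∧
        u ≠ v ∧ u ≠ x ∧ v ≠ x := by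
    by_cases hxa : x = a
    · exact ⟨b, c, by simp, by simp, hbc, by simp [hxa, hab.symm], by simp [hxa, hac.symm]⟩
    · by_cases hxb : x = b
      · exact ⟨a, c, by simp, by simp, hac, by simp [hxb, hab], by simp [hxb, hbc.symm]⟩
      · exact ⟨a, b, by simp, by simp, hab, fun h => hxa h.symm, fun h => hxb h.symm⟩
  have hsp := (h u v hux hvx).mp (samePart_PB.mpr (Or.inr ⟨hu, hv⟩))
  rw [samePart_PB] at hsp
  simp only [notMem_empty, false_and, or_false] at hsp
  exact huv hsp

lemma adj02 (hab : a ≠ b) (hac : a ≠ c) (hbc : b ≠ c) :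
    ∃ x, MovedBy (PB ({a, b, c} : Finset V)) (PB ({a, b} : Finset V)) x := by
  refine PB_adj c (PB_ne (u := a) (v := c) ⟨by simp, by simp⟩ hac (by simp [hac.symm, hbc.symm])) ?_
  intro u v hu hv
  simp only [mem_insert, mem_singleton, notMem_empty, false_and, and_false, or_false]
  constructor <;> intro h <;> aesop

lemma adj03 (hab : a ≠ b) (hac : a ≠ c) (hbc : b ≠ c) :
    ∃ x, MovedBy (PB ({a, b, c} : Finset V)) (PB ({a, c} : Finset V)) x := by
  refine PB_adj b (PB_ne (u := a) (v := b) ⟨by simp, by simp⟩ hab (by simp [hab.symm, hbc])) ?_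
  intro u v hu hv
  simp only [mem_insert, mem_singleton, notMem_empty, false_and, and_false, or_false]
  constructor <;> intro h <;> aesop

lemma adj04 (hab : a ≠ b) (hac : a ≠ c) (hbc : b ≠ c) :
    ∃ x, MovedBy (PB ({a, b, c} : Finset V)) (PB ({b, c} : Finset V)) x := by
  refine PB_adj a (PB_ne (u := a) (v := b) ⟨by simp, by simp⟩ hab (by simp [hab, hac])) ?_
  intro u v hu hv
  simp only [mem_insert, mem_singleton, notMem_empty, false_and, and_false, or_false]
  constructor <;> intro h <;> aesop

lemma adj12 (hab : a ≠ b) (hac : a ≠ c) (hbc : b ≠ c) :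
    ∃ x, MovedBy (PB ((∅ : Finset V) : Finset V)) (PB ({a, b} : Finset V)) x := by
  refine PB_adj a ((PB_ne (u := a) (v := b) ⟨by simp, by simp⟩ hab (by simp)).symm) ?_
  intro u v hu hv
  simp only [mem_insert, mem_singleton, notMem_empty, false_and, and_false, or_false]
  constructor <;> intro h <;> aesop

lemma adj13 (hab : a ≠ b) (hac : a ≠ c) (hbc : b ≠ c) :
    ∃ x, MovedBy (PB ((∅ : Finset V) : Finset V)) (PB ({a, c} : Finset V)) x := by
  refine PB_adj a ((PB_ne (u := a) (v := c) ⟨by simp, by simp⟩ hac (by simp)).symm) ?_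
  intro u v hu hv
  simp only [mem_insert, mem_singleton, notMem_empty, false_and, and_false, or_false]
  constructor <;> intro h <;> aesop

lemma adj14 (hab : a ≠ b) (hac : a ≠ c) (hbc : b ≠ c) :
    ∃ x, MovedBy (PB ((∅ : Finset V) : Finset V)) (PB ({b, c} : Finset V)) x := by
  refine PB_adj b ((PB_ne (u := b) (v := c) ⟨by simp, by simp⟩ hbc (by simp)).symm) ?_
  intro u v hu hv
  simp only [mem_insert, mem_singleton, notMem_empty, false_and, and_false, or_false]
  constructor <;> intro h <;> aesop

lemma adj23 (hab : a ≠ b) (hac : a ≠ c) (hbc : b ≠ c) :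
    ∃ x, MovedBy (PB ({a, b} : Finset V)) (PB ({a, c} : Finset V)) x := by
  refine PB_adj a (PB_ne (u := a) (v := b) ⟨by simp, by simp⟩ hab (by simp [hab.symm, hbc])) ?_
  intro u v hu hv
  simp only [mem_insert, mem_singleton, notMem_empty, false_and, and_false, or_false]
  constructor <;> intro h <;> aesop

lemma adj24 (hab : a ≠ b) (hac : a ≠ c) (hbc : b ≠ c) :
    ∃ x, MovedBy (PB ({a, b} : Finset V)) (PB ({b, c} : Finset V)) x := by
  refine PB_adj b (PB_ne (u := a) (v := b) ⟨by simp, by simp⟩ hab (by simp [hab, hac])) ?_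
  intro u v hu hv
  simp only [mem_insert, mem_singleton, notMem_empty, false_and, and_false, or_false]
  constructor <;> intro h <;> aesop

lemma adj34 (hab : a ≠ b) (hac : a ≠ c) (hbc : b ≠ c) :
    ∃ x, MovedBy (PB ({a, c} : Finset V)) (PB ({b, c} : Finset V)) x := by
  refine PB_adj c (PB_ne (u := a) (v := c) ⟨by simp, by simp⟩ hac (by simp [hab, hac])) ?_
  intro u v hu hv
  simp only [mem_insert, mem_singleton, notMem_empty, false_and, and_false, or_false]
  constructor <;> intro h <;> aesop

lemma adj_el (hab : a ≠ b) (hac : a ≠ c) (hbc : b ≠ c) (i j : Fin 5) :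
    (∃ x, MovedBy (PB (blk a b c i)) (PB (blk a b c j)) x) ↔ K5minusEdge.Adj i j := by
  have hdiag : ∀ B : Finset V, ¬ ∃ x, MovedBy (PB B) (PB B) x := by
    rintro B ⟨x, hne, -⟩; exact hne rfl
  fin_cases i <;> fin_cases j
  · exact iff_of_false (hdiag _) (fun h => h.1 rfl)
  · exact iff_of_false (not_adj_01 hab hac hbc) (fun h => h.2.1 ⟨rfl, rfl⟩)
  · exact iff_of_true (adj02 hab hac hbc) ⟨by decide, by decide, by decide⟩
  · exact iff_of_true (adj03 hab hac hbc) ⟨by decide, by decide, by decide⟩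
  · exact iff_of_true (adj04 hab hac hbc) ⟨by decide, by decide, by decide⟩
  · exact iff_of_false (fun h => not_adj_01 hab hac hbc (moved_symm h)) (fun h => h.2.2 ⟨rfl, rfl⟩)
  · exact iff_of_false (hdiag _) (fun h => h.1 rfl)
  · exact iff_of_true (adj12 hab hac hbc) ⟨by decide, by decide, by decide⟩
  · exact iff_of_true (adj13 hab hac hbc) ⟨by decide, by decide, by decide⟩
  · exact iff_of_true (adj14 hab hac hbc) ⟨by decide, by decide, by decide⟩
  · exact iff_of_true (moved_symm (adj02 hab hac hbc)) ⟨by decide, by decide, by decide⟩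
  · exact iff_of_true (moved_symm (adj12 hab hac hbc)) ⟨by decide, by decide, by decide⟩
  · exact iff_of_false (hdiag _) (fun h => h.1 rfl)
  · exact iff_of_true (adj23 hab hac hbc) ⟨by decide, by decide, by decide⟩
  · exact iff_of_true (adj24 hab hac hbc) ⟨by decide, by decide, by decide⟩
  · exact iff_of_true (moved_symm (adj03 hab hac hbc)) ⟨by decide, by decide, by decide⟩
  · exact iff_of_true (moved_symm (adj13 hab hac hbc)) ⟨by decide, by decide, by decide⟩
  · exact iff_of_true (moved_symm (adj23 hab hac hbc)) ⟨by decide, by decide, by decide⟩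
  · exact iff_of_false (hdiag _) (fun h => h.1 rfl)
  · exact iff_of_true (adj34 hab hac hbc) ⟨by decide, by decide, by decide⟩
  · exact iff_of_true (moved_symm (adj04 hab hac hbc)) ⟨by decide, by decide, by decide⟩
  · exact iff_of_true (moved_symm (adj14 hab hac hbc)) ⟨by decide, by decide, by decide⟩
  · exact iff_of_true (moved_symm (adj24 hab hac hbc)) ⟨by decide, by decide, by decide⟩
  · exact iff_of_true (moved_symm (adj34 hab hac hbc)) ⟨by decide, by decide, by decide⟩
  · exact iff_of_false (hdiag _) (fun h => h.1 rfl)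

end Adj

-- FINAL PART --

section Final
variable {a b c : V}

lemma idx_PB (hab : a ≠ b) (hac : a ≠ c) (hbc : b ≠ c) (i : Fin 5) :
    idx (PB (blk a b c i)) a b c = i := by
  fin_cases i <;>
    simp [idx, partPB_eq_iff, blk, hab, hac, hbc, hab.symm, hac.symm, hbc.symm]

end Final

theorem stmt18 (G : SimpleGraph V) (k : ℕ) (hn : 3 ≤ Fintype.card V)
    (hiso : Nonempty
      ((SimpleGraph.induce {v : V | ¬ IsUniversal G v} G) ≃g (⊥ : SimpleGraph (Fin 3))))
    (hk : k ≤ Fintype.card V - 2) :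
    Nonempty (UpperBell G k ≃g K5minusEdge) := by
  obtain ⟨e⟩ := hiso
  set S : Set V := {v : V | ¬ IsUniversal G v} with hS
  set a : V := ((e.symm 0 : S) : V) with ha
  set b : V := ((e.symm 1 : S) : V) with hb
  set c : V := ((e.symm 2 : S) : V) with hc
  have hmemS : ∀ i : Fin 3, ((e.symm i : S) : V) ∈ S := fun i => (e.symm i).2
  have hne : ∀ i j : Fin 3, i ≠ j → ((e.symm i : S) : V) ≠ ((e.symm j : S) : V) := by
    intro i j hij h
    exact hij (e.symm.injective (Subtype.ext h))
  have hab : a ≠ b := hne 0 1 (by decide)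
  have hac : a ≠ c := hne 0 2 (by decide)
  have hbc : b ≠ c := hne 1 2 (by decide)
  have hSadj : ∀ u v : V, u ∈ S → v ∈ S → ¬ G.Adj u v := by
    intro u v hu hv h
    have : (SimpleGraph.induce S G).Adj ⟨u, hu⟩ ⟨v, hv⟩ := h
    have h2 := e.map_rel_iff.mpr this
    simpa using h2
  have habcS : ∀ v : V, v ∈ ({a, b, c} : Finset V) → v ∈ S := by
    intro v hv
    simp only [mem_insert, mem_singleton] at hv
    rcases hv with rfl | rfl | rfl
    · exact hmemS 0
    · exact hmemS 1
    · exact hmemS 2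
  have hadj : ∀ u v : V, u ∈ ({a, b, c} : Finset V) → v ∈ ({a, b, c} : Finset V) →
      ¬ G.Adj u v := fun u v hu hv => hSadj u v (habcS u hu) (habcS v hv)
  have huniv : ∀ v : V, v ∉ ({a, b, c} : Finset V) → IsUniversal G v := by
    intro v hv
    by_contra hvu
    have hvS : v ∈ S := hvu
    apply hv
    have : (⟨v, hvS⟩ : S) = e.symm (e ⟨v, hvS⟩) := (e.symm_apply_apply _).symm
    have hval : v = ((e.symm (e ⟨v, hvS⟩) : S) : V) := congrArg Subtype.val this
    have : e ⟨v, hvS⟩ = 0 ∨ e ⟨v, hvS⟩ = 1 ∨ e ⟨v, hvS⟩ = 2 := by omega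
    rcases this with h | h | h <;> rw [h] at hval <;> simp [hval, ha, hb, hc]
  -- the five partitions are ISP and have enough parts
  have hisp : ∀ i : Fin 5, IsISP G (PB (blk a b c i)) := by
    intro i
    apply isp_PB _ hadj
    fin_cases i <;> simp [blk, insert_subset_iff]
  have hcard : ∀ i : Fin 5, k ≤ (PB (blk a b c i)).parts.card := fun i =>
    le_trans hk (card_bound hab hac hbc huniv hn (hisp i))
  refine ⟨⟨⟨fun P => idx P.1 a b c,
    fun i => ⟨PB (blk a b c i), hisp i, hcard i⟩, ?_, ?_⟩, ?_⟩⟩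
  · intro P
    exact Subtype.ext (classify hab hac hbc huniv P.2.1).symm
  · intro i
    exact idx_PB hab hac hbc i
  · intro P Q
    have h1 := classify hab hac hbc huniv P.2.1
    have h2 := classify hab hac hbc huniv Q.2.1
    have h3 := adj_el hab hac hbc (idx P.1 a b c) (idx Q.1 a b c)
    rw [← h1, ← h2] at h3
    exact h3.symm
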